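/- Let 0 < a ≤ b be natural numbers and let d = a + b. If r ≤ b, then there is no way to write the monomial x₀^a x₁^b in ℂ[x₀,x₁] as a linear combination of r d-th powers of linear forms: there exist no scalars α₁,…,α_r ∈ ℂ and linear forms L₁,…,L_r ∈ ℂ[x₀,x₁] with x₀^a x₁^b = ∑_{i=1}^{r} α_i · L_i^d. -/

import Mathlib

open MvPolynomial Finset

lemma deg_one_cases (m : Fin 2 →₀ ℕ) (h : m.degree = 1) :
    m = Finsupp.single 0 1 ∨ m = Finsupp.single 1 1 := by
  have h2 : m 0 + m 1 = 1 := by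
    have h3 : ∑ i ∈ m.support, m i = ∑ i : Fin 2, m i :=
      Finset.sum_subset (subset_univ _)
        (fun x _ hx => Finsupp.notMem_support_iff.mp hx)
    rw [Finsupp.degree_apply, h3, Fin.sum_univ_two] at h
    exact h
  rcases Nat.add_eq_one_iff.mp h2 with ⟨h0, h1⟩ | ⟨h0, h1⟩
  · right; ext x; fin_cases x <;> simp [h0, h1]
  · left; ext x; fin_cases x <;> simp [h0, h1]

lemma homog_one_eq (p : MvPolynomial (Fin 2) ℂ) (hp : p.IsHomogeneous 1) :
    p = C (coeff (Finsupp.single 0 1) p) * X 0 + C (coeff (Finsupp.single 1 1) p) * X 1 := by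
  apply MvPolynomial.ext
  intro m
  rw [coeff_add, coeff_C_mul, coeff_C_mul, coeff_X', coeff_X']
  by_cases hm : m.degree = 1
  · rcases deg_one_cases m hm with rfl | rfl
    · have : ¬ (Finsupp.single (1:Fin 2) 1 = Finsupp.single 0 1) := by
        intro h; simpa using (Finsupp.ext_iff.mp h 0)
      simp [this]
    · have : ¬ (Finsupp.single (0:Fin 2) 1 = Finsupp.single 1 1) := by
        intro h; simpa using (Finsupp.ext_iff.mp h 0)
      simp [this]
  · rw [hp.coeff_eq_zero hm]
    have h0 : ¬ (Finsupp.single (0:Fin 2) 1 = m) := by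
      rintro rfl; rw [Finsupp.degree_apply, Finsupp.support_single_ne_zero _ one_ne_zero] at hm; simp at hm
    have h1 : ¬ (Finsupp.single (1:Fin 2) 1 = m) := by
      rintro rfl; rw [Finsupp.degree_apply, Finsupp.support_single_ne_zero _ one_ne_zero] at hm; simp at hm
    simp [h0, h1]

lemma coeff_linear_pow (c e : ℂ) (d k : ℕ) (hk : k ≤ d) :
    coeff (Finsupp.single 0 (d-k) + Finsupp.single 1 k)
      ((C c * X 0 + C e * X 1 : MvPolynomial (Fin 2) ℂ)^d)
      = (d.choose k : ℂ) * c^(d-k) * e^k := by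
  rw [add_pow, coeff_sum]
  rw [Finset.sum_eq_single (d-k)]
  · rw [Nat.sub_sub_self hk, Nat.choose_symm hk,
      ← map_natCast (C : ℂ →+* MvPolynomial (Fin 2) ℂ) (d.choose k),
      mul_pow, mul_pow, ← C_pow, ← C_pow,
      show ∀ (u v w z : MvPolynomial (Fin 2) ℂ), u * v * (w * z) * C ((d.choose k : ℕ) : ℂ)
        = C ((d.choose k : ℕ) : ℂ) * (u * (w * (v * z))) from fun _ _ _ _ => by ring,
      coeff_C_mul, X_pow_eq_monomial, X_pow_eq_monomial, monomial_mul, one_mul, C_mul_monomial, C_mul_monomial, coeff_monomial, if_pos rfl]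
    ring
  · intro j hj hne
    rw [← map_natCast (C : ℂ →+* MvPolynomial (Fin 2) ℂ) (d.choose j),
      mul_pow, mul_pow, ← C_pow, ← C_pow,
      show ∀ (u v w z : MvPolynomial (Fin 2) ℂ), u * v * (w * z) * C ((d.choose j : ℕ) : ℂ)
        = C ((d.choose j : ℕ) : ℂ) * (u * (w * (v * z))) from fun _ _ _ _ => by ring,
      coeff_C_mul, X_pow_eq_monomial, X_pow_eq_monomial, monomial_mul, one_mul, C_mul_monomial, C_mul_monomial, coeff_monomial, if_neg, mul_zero]
    intro h
    exact hne (by simpa using (Finsupp.ext_iff.mp h 0))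
  · intro h
    exact absurd (Finset.mem_range.mpr (by omega)) h

/-- If `0 < a ≤ b` and `r ≤ b`, the monomial `x₀^a x₁^b` in `ℂ[x₀,x₁]` is not a
linear combination of `r` `(a+b)`-th powers of linear forms. -/
theorem monomial_complex_no_short_waring (a b r : ℕ) (ha : 0 < a) (hab : a ≤ b)
    (hr : r ≤ b) :
    ¬ ∃ (α : Fin r → ℂ) (L : Fin r → MvPolynomial (Fin 2) ℂ),
      (∀ i, (L i).IsHomogeneous 1) ∧
      (X 0 ^ a * X 1 ^ b : MvPolynomial (Fin 2) ℂ) = ∑ i, α i • L i ^ (a + b) := by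
  rintro ⟨α, L, hL, heq⟩
  set c : Fin r → ℂ := fun i => coeff (Finsupp.single 0 1) (L i) with hc
  set e : Fin r → ℂ := fun i => coeff (Finsupp.single 1 1) (L i) with he
  have hLi : ∀ i, L i = C (c i) * X 0 + C (e i) * X 1 := fun i => homog_one_eq _ (hL i)
  simp only [hLi] at heq
  have ht : ∀ k ≤ a + b, ((a+b).choose k : ℂ) * (∑ i, α i * (c i)^(a+b-k) * (e i)^k)
      = if k = b then 1 else 0 := by
    intro k hk
    have h := congrArg (coeff (Finsupp.single 0 (a+b-k) + Finsupp.single 1 k)) heq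
    rw [coeff_sum] at h
    simp only [coeff_smul] at h
    have hL : ∀ i : Fin r, coeff (Finsupp.single 0 (a+b-k) + Finsupp.single 1 k)
        ((C (c i) * X 0 + C (e i) * X 1 : MvPolynomial (Fin 2) ℂ) ^ (a+b))
        = ((a+b).choose k : ℂ) * (c i)^(a+b-k) * (e i)^k := fun i => coeff_linear_pow _ _ _ _ hk
    simp only [hL, smul_eq_mul] at h
    have hLHS : coeff (Finsupp.single 0 (a+b-k) + Finsupp.single 1 k)
        (X 0 ^ a * X 1 ^ b : MvPolynomial (Fin 2) ℂ) = if k = b then 1 else 0 := by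
      rw [X_pow_eq_monomial, X_pow_eq_monomial, monomial_mul, one_mul, coeff_monomial]
      by_cases hkb : k = b
      · subst hkb
        rw [if_pos rfl, if_pos (by rw [Nat.add_sub_cancel])]
      · rw [if_neg hkb, if_neg]
        intro hcon
        have := Finsupp.ext_iff.mp hcon 1
        simp [Finsupp.single_apply] at this
        omega
    rw [hLHS] at h
    rw [h, Finset.mul_sum]
    apply Finset.sum_congr rfl
    intro i _
    ring
  set d := a + b with hd
  set t : ℕ → ℂ := fun m => ∑ i, α i * (c i)^(d-m) * (e i)^m with htdef
  -- t vanishes off b, nonzero at b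
  have ht0 : ∀ k ≤ d, k ≠ b → t k = 0 := by
    intro k hk hkb
    have h := ht k hk
    rw [if_neg hkb] at h
    have hch : ((d.choose k : ℕ) : ℂ) ≠ 0 := by
      simp [Nat.choose_eq_zero_iff]; omega
    exact (mul_eq_zero.mp h).resolve_left hch
  have htb : t b ≠ 0 := by
    intro h0
    have h := ht b (by omega)
    rw [if_pos rfl] at h
    rw [show (∑ i : Fin r, α i * c i ^ (d - b) * e i ^ b) = t b from rfl, h0, mul_zero] at h
    exact one_ne_zero h.symm
  -- the annihilator polynomial
  set S : Finset (Fin r) := univ.filter (fun i => c i ≠ 0) with hS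
  set s : ℕ := S.card with hs
  have hsb : s ≤ b := le_trans ((card_filter_le _ _).trans (by simp)) hr
  have hsr : s ≤ r := (card_filter_le _ _).trans (by simp)
  set Q : Polynomial ℂ := ∏ i ∈ S, (Polynomial.C (c i) * Polynomial.X - Polynomial.C (e i))
    with hQ
  have hfact : ∀ i ∈ S, (Polynomial.C (c i) * Polynomial.X - Polynomial.C (e i)).natDegree = 1 := by
    intro i hi
    have hci : c i ≠ 0 := by simpa [hS] using hi
    rw [sub_eq_add_neg, ← Polynomial.C_neg]
    exact Polynomial.natDegree_linear hci
  have hQdeg : Q.natDegree = s := by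
    rw [hQ, Polynomial.natDegree_prod]
    · rw [Finset.sum_congr rfl hfact]; simp [hs]
    · intro i hi
      intro h0
      have := hfact i hi
      rw [h0] at this
      simp at this
  have hQlead : Q.coeff s ≠ 0 := by
    have : Q.leadingCoeff ≠ 0 := by
      rw [Polynomial.leadingCoeff_ne_zero, hQ]
      apply Finset.prod_ne_zero_iff.mpr
      intro i hi h0
      have := hfact i hi
      rw [h0] at this; simp at this
    rwa [Polynomial.leadingCoeff, hQdeg] at this
  have hroot : ∀ i ∈ S, Q.eval (e i / c i) = 0 := by
    intro i hi
    have hci : c i ≠ 0 := by simpa [hS] using hi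
    rw [hQ, Polynomial.eval_prod]
    apply Finset.prod_eq_zero hi
    simp
    field_simp
    simp
  -- key sum computed from the definition of t : it vanishes
  have hkey0 : ∑ j ∈ range (s+1), Q.coeff j * t (b - s + j) = 0 := by
    have hswap : ∑ j ∈ range (s+1), Q.coeff j * t (b - s + j)
        = ∑ i : Fin r, α i *
            ∑ j ∈ range (s+1), Q.coeff j * (c i)^(d-(b-s+j)) * (e i)^(b-s+j) := by
      simp only [htdef, Finset.mul_sum]
      rw [Finset.sum_comm]
      apply Finset.sum_congr rfl
      intro i _
      apply Finset.sum_congr rfl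
      intro j _
      ring
    rw [hswap]
    apply Finset.sum_eq_zero
    intro i _
    by_cases hiS : i ∈ S
    · have hci : c i ≠ 0 := by simpa [hS] using hiS
      have hinner : ∑ j ∈ range (s+1), Q.coeff j * (c i)^(d-(b-s+j)) * (e i)^(b-s+j)
          = (c i)^(d-(b-s)) * (e i)^(b-s) * Q.eval (e i / c i) := by
        rw [Polynomial.eval_eq_sum_range, hQdeg, Finset.mul_sum]
        apply Finset.sum_congr rfl
        intro j hj
        have hj' : j ≤ s := by simpa using Nat.lt_succ_iff.mp (Finset.mem_range.mp hj)
        have h1 : d - (b-s+j) = (d - (b-s)) - j := by omega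
        have h2 : j ≤ d - (b-s) := by omega
        rw [h1, pow_sub₀ _ hci h2, pow_add, div_pow]
        field_simp
      rw [hinner, hroot i hiS, mul_zero, mul_zero]
    · have hci : c i = 0 := by simpa [hS] using hiS
      have : ∑ j ∈ range (s+1), Q.coeff j * (c i)^(d-(b-s+j)) * (e i)^(b-s+j) = 0 := by
        apply Finset.sum_eq_zero
        intro j hj
        have hj' : j ≤ s := Nat.lt_succ_iff.mp (Finset.mem_range.mp hj)
        rw [hci, zero_pow (by omega : d - (b-s+j) ≠ 0), mul_zero, zero_mul]
      rw [this, mul_zero]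
  -- key sum computed from the coefficient equations : it equals Q.coeff s * t b
  have hkey1 : ∑ j ∈ range (s+1), Q.coeff j * t (b - s + j) = Q.coeff s * t b := by
    rw [Finset.sum_eq_single s]
    · rw [show b - s + s = b by omega]
    · intro j hj hjs
      have hj' : j ≤ s := Nat.lt_succ_iff.mp (Finset.mem_range.mp hj)
      rw [ht0 (b-s+j) (by omega) (by omega), mul_zero]
    · intro h; exact absurd (Finset.self_mem_range_succ s) h
  rw [hkey1] at hkey0
  exact (mul_ne_zero hQlead htb) hkey0
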